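/- Let L be a finite ranked atomic geometric meet semi-lattice. For each l ∈ L choose a set of atoms S(l) with ∨S(l) = l and |S(l)| = r(l). Then the projections of the exterior monomials e_{S(l)}, l ∈ L, form a k-basis of ⋀L = ⋀V / I_L over a field k of characteristic 2. -/

import Mathlib

/-- The rank function is compatible with the covering relation. -/
def CoverRank {P : Type*} [PartialOrder P] (rk : P → ℕ) : Prop :=
  ∀ a b : P, a ⋖ b → rk b = rk a + 1

/-- The rank function is strictly monotone (the poset is graded). -/
def RankStrictMono {P : Type*} [PartialOrder P] (rk : P → ℕ) : Prop :=
  ∀ a b : P, a < b → rk a < rk b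

/-- The diamond property: every interval of rank 2 contains at least two
intermediate elements. -/
def DiamondProp {P : Type*} [PartialOrder P] (rk : P → ℕ) : Prop :=
  ∀ x y : P, x < y → rk y = rk x + 2 →
    ∃ a b : P, a ≠ b ∧ a ∈ Set.Ioo x y ∧ b ∈ Set.Ioo x y

/-- The parallelogram property (Definition of the paper): for every `x̂` and every
`y > x̂`, if the chain `x̂ = x 0 ⋖ x 1 ⋖ ... ⋖ x r` (`r > 0`) equals the closed
interval `[x̂, x r]`, is maximal w.r.t. inclusion among chain-intervals above `x̂`,
and `r` is less than the rank of `y` in `P(x̂)`, then whenever `x i < y` and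
`x (i+1) ≰ y` for some `0 < i ≤ r` (interpreting, for `i = r`, the latter as
`[x̂, y]` is not a chain), there exists `y'` with `x̂ ≤ y'`, `y' ⋖ y`,
`x (i-1) < y'` and `¬ x i ≤ y'`. -/
def ParallelogramProp {P : Type*} [PartialOrder P] (rk : P → ℕ) : Prop :=
  ∀ (xh y : P) (r : ℕ) (x : ℕ → P),
    xh < y → 0 < r → x 0 = xh →
    (∀ j, j < r → x j ⋖ x (j + 1)) →
    Set.Icc xh (x r) = {p | ∃ j ≤ r, p = x j} →
    (∀ z : P, x r < z → ¬ IsChain (· ≤ ·) (Set.Icc xh z)) →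
    r < rk y - rk xh →
    ∀ i, 0 < i → i ≤ r → x i < y →
      ((i < r ∧ ¬ x (i + 1) ≤ y) ∨ (i = r ∧ ¬ IsChain (· ≤ ·) (Set.Icc xh y))) →
      ∃ y' : P, xh ≤ y' ∧ y' ⋖ y ∧ x (i - 1) < y' ∧ ¬ x i ≤ y'

/-- Atomic: every element is the join of the atoms (rank-1 elements) below it. -/
def AtomicRk {L : Type*} [PartialOrder L] (rk : L → ℕ) : Prop :=
  ∀ l : L, IsLUB {a : L | rk a = 1 ∧ a ≤ l} l



open ExteriorAlgebra

lemma efr_pairwise_all {α : Type*} {R : α → α → Prop} (h : ∀ a b, R a b) (l : List α) :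
    l.Pairwise R := by
  induction l with
  | nil => simp
  | cons a t ih => exact List.Pairwise.cons (fun b _ => h a b) ih

section CharTwoProd
variable {k : Type*} [Field k] {A : Type*} [Fintype A] [DecidableEq A]

lemma efr_addself {M : Type*} [AddCommGroup M] [Module k M] (h2 : (2:k) = 0) (x : M) :
    x + x = 0 := by
  have h := two_smul k x
  rw [h2, zero_smul] at h
  exact h.symm

/-- the monomial generator -/
noncomputable def efrg (a : A) : ExteriorAlgebra k (A → k) := ι k (Pi.single a (1:k))

omit [Fintype A] [DecidableEq A] in
lemma efr_comm (h2 : (2:k) = 0) (u w : A → k) :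
    ι k u * ι k w = ι k w * ι k u := by
  have h := ι_add_mul_swap (R := k) u w
  have h3 := efr_addself (k := k) h2 (ι k w * ι k u)
  exact add_right_cancel (h.trans h3.symm)

lemma efr_prod_perm (h2 : (2:k) = 0) {l1 l2 : List A} (h : l1.Perm l2) :
    ((l1.map (efrg (k:=k))).prod) = (l2.map (efrg (k:=k))).prod := by
  refine (h.map _).prod_eq' ?_
  rw [List.pairwise_map]
  exact efr_pairwise_all (fun a b => efr_comm h2 _ _) l1

lemma efr_prod_list (h2 : (2:k) = 0) (ls : List A) :
    ((ls.map (efrg (k:=k))).prod) =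
      if ls.Nodup then ((ls.toFinset.toList.map (efrg (k:=k))).prod) else 0 := by
  by_cases h : ls.Nodup
  · rw [if_pos h]
    refine efr_prod_perm h2 (List.perm_iff_count.mpr fun a => ?_)
    rw [h.count, (Finset.nodup_toList _).count]
    simp
  · rw [if_neg h]
    have h' := h
    rw [List.nodup_iff_count_le_one] at h'
    push_neg at h'
    obtain ⟨a, ha⟩ := h'
    have hmem : a ∈ ls := by
      rw [← List.count_pos_iff]
      omega
    have hmem2 : a ∈ ls.erase a := by
      rw [← List.count_pos_iff, List.count_erase_self]
      omega
    have hperm : ls.Perm (a :: a :: (ls.erase a).erase a) :=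
      (List.perm_cons_erase hmem).trans ((List.perm_cons_erase hmem2).cons a)
    rw [efr_prod_perm h2 hperm]
    simp only [List.map_cons, List.prod_cons, ← mul_assoc]
    have h0 : efrg (k:=k) a * efrg a = 0 := ι_sq_zero _
    simp [h0]

/-- product over a finset -/
noncomputable def efre (S : Finset A) : ExteriorAlgebra k (A → k) :=
  (S.toList.map (efrg (k:=k))).prod

lemma efr_prod_list' (h2 : (2:k) = 0) (ls : List A) :
    ((ls.map (efrg (k:=k))).prod) = if ls.Nodup then efre ls.toFinset else 0 :=
  efr_prod_list h2 ls

end CharTwoProd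



set_option linter.unusedSectionVars false

section Lattice
variable {L : Type*} [SemilatticeInf L] [OrderBot L] [Fintype L] [DecidableEq L]
variable (rk : L → ℕ)

open Classical in
/-- any set with an upper bound has a least upper bound -/
lemma efr_exists_isLUB (T : Set L) {u : L} (hu : u ∈ upperBounds T) : ∃ l, IsLUB T l := by
  classical
  let s : Finset L := Finset.univ.filter (· ∈ upperBounds T)
  have hs : s.Nonempty := ⟨u, by simp [s, hu]⟩
  refine ⟨s.inf' hs id, fun t ht => ?_, fun b hb => ?_⟩
  · exact Finset.le_inf' _ _ fun b hb => by
      simp only [s, Finset.mem_filter, Finset.mem_univ, true_and] at hb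
      exact hb ht
  · exact Finset.inf'_le id (by simp [s, hb])

lemma efr_ub_insert {s : Set L} {x : L} (hx : IsLUB s x) (a : L) :
    upperBounds (insert a s) = upperBounds ({a, x} : Set L) := by
  ext u
  simp only [upperBounds_insert, upperBounds_singleton, Set.mem_inter_iff, Set.mem_Ici]
  constructor
  · rintro ⟨h1, h2⟩
    exact ⟨h1, hx.2 h2⟩
  · rintro ⟨h1, h2⟩
    exact ⟨h1, fun t ht => le_trans (hx.1 ht) h2⟩

lemma efr_isLUB_congr {s t : Set L} (h : upperBounds s = upperBounds t) {j : L} :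
    IsLUB s j ↔ IsLUB t j := by
  unfold IsLUB IsLeast lowerBounds
  rw [h]

variable (hm : RankStrictMono rk) (h0 : rk ⊥ = 0)
variable (hgeo : ∀ x y j : L, IsLUB ({x, y} : Set L) j → rk (x ⊓ y) + rk j ≤ rk x + rk y)

include hm in
lemma efr_rk_mono {x y : L} (h : x ≤ y) : rk x ≤ rk y := by
  rcases eq_or_lt_of_le h with h | h
  · exact h ▸ le_rfl
  · exact (hm _ _ h).le

include hgeo in
lemma efr_rk_pair_le {x a j : L} (ha : rk a = 1) (h : IsLUB ({x, a} : Set L) j) :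
    rk j ≤ rk x + 1 := by
  have := hgeo x a j h
  omega


variable {rk} in
include h0 hgeo in
lemma efr_rk_le_card (S : Finset {a : L // rk a = 1}) :
    ∀ j, IsLUB (Subtype.val '' (S : Set {a : L // rk a = 1})) j → rk j ≤ S.card := by
  classical
  induction S using Finset.induction_on with
  | empty =>
    intro j hj
    simp only [Finset.coe_empty, Set.image_empty] at hj
    have hb : j ≤ ⊥ := hj.2 (by intro t ht; exact absurd ht (by simp))
    rw [le_bot_iff.mp hb, h0]
    simp
  | @insert a S ha ih =>
    intro j hj
    have himg : Subtype.val '' ((insert a S : Finset _) : Set {a : L // rk a = 1})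
        = insert (↑a) (Subtype.val '' (S : Set {a : L // rk a = 1})) := by
      simp [Set.image_insert_eq]
    rw [himg] at hj
    have hjub : j ∈ upperBounds (Subtype.val '' (S : Set {a : L // rk a = 1})) :=
      fun t ht => hj.1 (Set.mem_insert_of_mem _ ht)
    obtain ⟨l', hl'⟩ := efr_exists_isLUB _ hjub
    have hpair : IsLUB ({l', (↑a : L)} : Set L) j := by
      rw [Set.pair_comm, ← efr_isLUB_congr (efr_ub_insert hl' (↑a : L))]
      exact hj
    have h1 : rk j ≤ rk l' + 1 := efr_rk_pair_le rk hgeo a.2 hpair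
    have h2 := ih l' hl'
    have h3 := Finset.card_insert_of_notMem ha
    omega

variable {rk} in
include h0 hgeo in
lemma efr_union_rank (T S : Finset {a : L // rk a = 1}) :
    ∀ j s, IsLUB (Subtype.val '' (S : Set {a : L // rk a = 1})) s →
      IsLUB (Subtype.val '' ((S ∪ T : Finset _) : Set {a : L // rk a = 1})) j →
      rk j ≤ rk s + T.card := by
  classical
  induction T using Finset.induction_on with
  | empty =>
    intro j s hs hj
    rw [Finset.union_empty] at hj
    rw [hj.unique hs]
    simp
  | @insert a T ha ih =>
    intro j s hs hj
    rw [Finset.union_insert] at hj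
    have himg : Subtype.val '' ((insert a (S ∪ T) : Finset _) : Set {a : L // rk a = 1})
        = insert (↑a) (Subtype.val '' ((S ∪ T : Finset _) : Set {a : L // rk a = 1})) := by
      simp [Set.image_insert_eq]
    rw [himg] at hj
    have hjub : j ∈ upperBounds (Subtype.val '' ((S ∪ T : Finset _) : Set {a : L // rk a = 1})) :=
      fun t ht => hj.1 (Set.mem_insert_of_mem _ ht)
    obtain ⟨l', hl'⟩ := efr_exists_isLUB _ hjub
    have hpair : IsLUB ({l', (↑a : L)} : Set L) j := by
      rw [Set.pair_comm, ← efr_isLUB_congr (efr_ub_insert hl' (↑a : L))]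
      exact hj
    have h1 : rk j ≤ rk l' + 1 := efr_rk_pair_le rk hgeo a.2 hpair
    have h2 := ih l' s hs hl'
    have h3 := Finset.card_insert_of_notMem ha
    omega

variable {rk} in
include h0 hgeo in
lemma efr_subset_indep {S U : Finset {a : L // rk a = 1}} {u s : L}
    (hSU : S ⊆ U) (hu : IsLUB (Subtype.val '' (U : Set {a : L // rk a = 1})) u)
    (hcard : rk u = U.card)
    (hs : IsLUB (Subtype.val '' (S : Set {a : L // rk a = 1})) s) :
    rk s = S.card := by
  classical
  have h1 : rk s ≤ S.card := efr_rk_le_card h0 hgeo S s hs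
  have hun : S ∪ (U \ S) = U := Finset.union_sdiff_of_subset hSU
  have h2 : rk u ≤ rk s + (U \ S).card := by
    refine efr_union_rank h0 hgeo (U \ S) S u s hs ?_
    rw [hun]; exact hu
  have h3 : (U \ S).card = U.card - S.card := Finset.card_sdiff_of_subset hSU
  have h4 : S.card ≤ U.card := Finset.card_le_card hSU
  omega

variable {rk} in
lemma efr_dep_ext {S : Finset {a : L // rk a = 1}} {a : {a : L // rk a = 1}} {l : L}
    (hl : IsLUB (Subtype.val '' (S : Set {a : L // rk a = 1})) l) (ha : (↑a : L) ≤ l) :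
    IsLUB (Subtype.val '' ((insert a S : Finset _) : Set {a : L // rk a = 1})) l := by
  classical
  have himg : Subtype.val '' ((insert a S : Finset _) : Set {a : L // rk a = 1})
      = insert (↑a) (Subtype.val '' (S : Set {a : L // rk a = 1})) := by
    simp [Set.image_insert_eq]
  rw [himg, efr_isLUB_congr (efr_ub_insert hl (↑a : L))]
  constructor
  · rintro t (rfl | rfl)
    · exact ha
    · exact le_rfl
  · intro b hb
    exact hb (by simp)

end Lattice

section CFun
variable {L : Type*} [SemilatticeInf L] [OrderBot L] [Fintype L] [DecidableEq L]
variable {k : Type*} [Field k] (rk : L → ℕ)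

open Classical in
noncomputable def efrc (S : Finset {a : L // rk a = 1}) : L → k :=
  fun l => if (IsLUB (Subtype.val '' (S : Set {a : L // rk a = 1})) l ∧ rk l = S.card)
    then 1 else 0

variable {rk}

lemma efrc_apply_pos {S : Finset {a : L // rk a = 1}} {l : L}
    (h1 : IsLUB (Subtype.val '' (S : Set {a : L // rk a = 1})) l) (h2 : rk l = S.card) :
    efrc (k := k) rk S l = 1 := by
  classical
  rw [efrc, if_pos ⟨h1, h2⟩]

lemma efrc_apply_neg {S : Finset {a : L // rk a = 1}} {l : L}
    (h : ¬(IsLUB (Subtype.val '' (S : Set {a : L // rk a = 1})) l ∧ rk l = S.card)) :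
    efrc (k := k) rk S l = 0 := by
  classical
  rw [efrc, if_neg h]

lemma efrc_zero_of_nojoin {S U : Finset {a : L // rk a = 1}} (hSU : S ⊆ U)
    (hS : ¬∃ l, IsLUB (Subtype.val '' (S : Set {a : L // rk a = 1})) l) :
    efrc (k := k) rk U = 0 := by
  funext l
  refine efrc_apply_neg fun ⟨hl, _⟩ => hS (efr_exists_isLUB _ (u := l) ?_)
  rintro t ⟨a, haS, rfl⟩
  exact hl.1 ⟨a, hSU haS, rfl⟩

variable (hm : RankStrictMono rk) (h0 : rk ⊥ = 0)
variable (hgeo : ∀ x y j : L, IsLUB ({x, y} : Set L) j → rk (x ⊓ y) + rk j ≤ rk x + rk y)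

include h0 hgeo in
lemma efrc_zero_of_badrank {S U : Finset {a : L // rk a = 1}} (hSU : S ⊆ U) {l : L}
    (hl : IsLUB (Subtype.val '' (S : Set {a : L // rk a = 1})) l) (hrk : rk l ≠ S.card) :
    efrc (k := k) rk U = 0 := by
  funext j
  refine efrc_apply_neg fun ⟨hj, hjc⟩ => ?_
  exact hrk (efr_subset_indep h0 hgeo hSU hj hjc hl)

lemma efr_ub_union (W S : Finset {a : L // rk a = 1}) :
    upperBounds (Subtype.val '' ((W ∪ S : Finset _) : Set {a : L // rk a = 1}))
      = upperBounds (Subtype.val '' (W : Set {a : L // rk a = 1}))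
        ∩ upperBounds (Subtype.val '' (S : Set {a : L // rk a = 1})) := by
  rw [← upperBounds_union]
  congr 1
  rw [Finset.coe_union, Set.image_union]

include h0 hgeo in
lemma efrc_congr {S T W : Finset {a : L // rk a = 1}} {l : L}
    (hS : IsLUB (Subtype.val '' (S : Set {a : L // rk a = 1})) l)
    (hT : IsLUB (Subtype.val '' (T : Set {a : L // rk a = 1})) l)
    (hcard : S.card = T.card)
    (hWS : Disjoint W S) (hWT : Disjoint W T) :
    efrc (k := k) rk (W ∪ S) = efrc (k := k) rk (W ∪ T) := by
  have hub : upperBounds (Subtype.val '' ((W ∪ S : Finset _) : Set {a : L // rk a = 1}))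
      = upperBounds (Subtype.val '' ((W ∪ T : Finset _) : Set {a : L // rk a = 1})) := by
    rw [efr_ub_union, efr_ub_union, hS.upperBounds_eq, hT.upperBounds_eq]
  funext j
  classical
  rw [efrc, efrc]
  congr 1
  rw [eq_iff_iff]
  constructor
  · rintro ⟨h1, h2⟩
    refine ⟨(efr_isLUB_congr hub).mp h1, ?_⟩
    rw [h2, Finset.card_union_of_disjoint hWS, Finset.card_union_of_disjoint hWT, hcard]
  · rintro ⟨h1, h2⟩
    refine ⟨(efr_isLUB_congr hub).mpr h1, ?_⟩
    rw [h2, Finset.card_union_of_disjoint hWS, Finset.card_union_of_disjoint hWT, hcard]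

include h0 hgeo in
lemma efrc_mixed_zero {S T W : Finset {a : L // rk a = 1}} {l : L}
    (hS : IsLUB (Subtype.val '' (S : Set {a : L // rk a = 1})) l)
    (hT : IsLUB (Subtype.val '' (T : Set {a : L // rk a = 1})) l)
    (hrkl : rk l = S.card)
    (hWS : Disjoint W S) (hWT : ¬ Disjoint W T) :
    efrc (k := k) rk (W ∪ S) = 0 := by
  classical
  rw [Finset.not_disjoint_iff] at hWT
  obtain ⟨a, haW, haT⟩ := hWT
  have haS : a ∉ S := fun h => (Finset.disjoint_left.mp hWS haW) h
  have hal : (↑a : L) ≤ l := hT.1 ⟨a, haT, rfl⟩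
  have hins : IsLUB (Subtype.val '' ((insert a S : Finset _) : Set {a : L // rk a = 1})) l :=
    efr_dep_ext hS hal
  funext j
  refine efrc_apply_neg fun ⟨hj, hjc⟩ => ?_
  have hsub : insert a S ⊆ W ∪ S := by
    intro x hx
    rcases Finset.mem_insert.mp hx with rfl | hx
    · exact Finset.mem_union_left _ haW
    · exact Finset.mem_union_right _ hx
  have := efr_subset_indep h0 hgeo hsub hj hjc hins
  rw [Finset.card_insert_of_notMem haS] at this
  omega

end CFun

section CList
variable {L : Type*} [SemilatticeInf L] [OrderBot L] [Fintype L] [DecidableEq L]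
variable {k : Type*} [Field k] (rk : L → ℕ)

lemma efr_nodup_triple {α : Type*} [DecidableEq α] {w w' l : List α} (hl : l.Nodup) :
    (w ++ l ++ w').Nodup ↔ (w ++ w').Nodup ∧ ∀ x ∈ l, x ∉ w ∧ x ∉ w' := by
  simp only [List.nodup_append, List.disjoint_append_right, List.disjoint_append_left,
    List.Disjoint, List.mem_append, hl, true_and]
  constructor
  · rintro ⟨⟨hw, hwl⟩, hw', hww'⟩
    refine ⟨⟨hw, hw', fun a ha b hb => hww' a (Or.inl ha) b hb⟩,
      fun x hx => ⟨fun hw => hwl x hw x hx rfl, fun hw => hww' x (Or.inr hx) x hw rfl⟩⟩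
  · rintro ⟨⟨hw, hw', hww'⟩, h⟩
    exact ⟨⟨hw, fun a ha b hb hab => (h b hb).1 (by subst hab; exact ha)⟩, hw',
      fun a ha b hb hab => ha.elim (fun h1 => hww' a h1 b hb hab)
        (fun h1 => (h a h1).2 (by subst hab; exact hb))⟩

lemma efr_toFinset_triple {α : Type*} [DecidableEq α] (w w' l : List α) :
    (w ++ l ++ w').toFinset = (w ++ w').toFinset ∪ l.toFinset := by
  ext x
  simp only [List.toFinset_append, Finset.mem_union, List.mem_toFinset]
  tauto

open Classical in
noncomputable def efrcl (ls : List {a : L // rk a = 1}) : L → k :=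
  if ls.Nodup then efrc rk ls.toFinset else 0

variable {rk}
variable (h0 : rk ⊥ = 0)
variable (hgeo : ∀ x y j : L, IsLUB ({x, y} : Set L) j → rk (x ⊓ y) + rk j ≤ rk x + rk y)

lemma efrcl_eq_of_nodup {ls : List {a : L // rk a = 1}} (h : ls.Nodup) :
    efrcl (k := k) rk ls = efrc rk ls.toFinset := by
  classical
  rw [efrcl, if_pos h]

lemma efrcl_eq_of_not_nodup {ls : List {a : L // rk a = 1}} (h : ¬ ls.Nodup) :
    efrcl (k := k) rk ls = 0 := by
  classical
  rw [efrcl, if_neg h]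

lemma efr_sub_triple (w w' : List {a : L // rk a = 1}) (S : Finset {a : L // rk a = 1}) :
    S ⊆ (w ++ S.toList ++ w').toFinset := by
  intro x hx
  rw [efr_toFinset_triple]
  exact Finset.mem_union_right _ (by rw [List.mem_toFinset, Finset.mem_toList]; exact hx)

lemma efrcl_gen1 (w w' : List {a : L // rk a = 1}) {S : Finset {a : L // rk a = 1}}
    (hS : ¬∃ l, IsLUB (Subtype.val '' (S : Set {a : L // rk a = 1})) l) :
    efrcl (k := k) rk (w ++ S.toList ++ w') = 0 := by
  by_cases h : (w ++ S.toList ++ w').Nodup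
  · rw [efrcl_eq_of_nodup h]
    exact efrc_zero_of_nojoin (efr_sub_triple w w' S) hS
  · exact efrcl_eq_of_not_nodup h

include h0 hgeo in
lemma efrcl_gen2 (w w' : List {a : L // rk a = 1}) {S : Finset {a : L // rk a = 1}} {l : L}
    (hl : IsLUB (Subtype.val '' (S : Set {a : L // rk a = 1})) l) (hrk : rk l ≠ S.card) :
    efrcl (k := k) rk (w ++ S.toList ++ w') = 0 := by
  by_cases h : (w ++ S.toList ++ w').Nodup
  · rw [efrcl_eq_of_nodup h]
    exact efrc_zero_of_badrank h0 hgeo (efr_sub_triple w w' S) hl hrk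
  · exact efrcl_eq_of_not_nodup h

lemma efr_disjoint_iff (w w' : List {a : L // rk a = 1}) (S : Finset {a : L // rk a = 1}) :
    Disjoint (w ++ w').toFinset S ↔ ∀ x ∈ S.toList, x ∉ w ∧ x ∉ w' := by
  rw [Finset.disjoint_right]
  constructor
  · intro h x hx
    have := h (a := x) (by rw [Finset.mem_toList] at hx; exact hx)
    rw [List.mem_toFinset, List.mem_append] at this
    exact ⟨fun hw => this (Or.inl hw), fun hw => this (Or.inr hw)⟩
  · intro h x hxS hxW
    rw [List.mem_toFinset, List.mem_append] at hxW
    have := h x (by rw [Finset.mem_toList]; exact hxS)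
    rcases hxW with hw | hw
    · exact this.1 hw
    · exact this.2 hw

include h0 hgeo in
lemma efrcl_gen3 (w w' : List {a : L // rk a = 1}) {S T : Finset {a : L // rk a = 1}} {l : L}
    (hS : IsLUB (Subtype.val '' (S : Set {a : L // rk a = 1})) l)
    (hT : IsLUB (Subtype.val '' (T : Set {a : L // rk a = 1})) l)
    (hrkl : rk l = S.card) (hcard : S.card = T.card) :
    efrcl (k := k) rk (w ++ S.toList ++ w') = efrcl (k := k) rk (w ++ T.toList ++ w') := by
  classical
  by_cases hww : (w ++ w').Nodup
  · by_cases hDS : Disjoint (w ++ w').toFinset S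
    · by_cases hDT : Disjoint (w ++ w').toFinset T
      · rw [efrcl_eq_of_nodup ((efr_nodup_triple (Finset.nodup_toList S)).mpr
            ⟨hww, (efr_disjoint_iff w w' S).mp hDS⟩),
          efrcl_eq_of_nodup ((efr_nodup_triple (Finset.nodup_toList T)).mpr
            ⟨hww, (efr_disjoint_iff w w' T).mp hDT⟩),
          efr_toFinset_triple, efr_toFinset_triple, Finset.toList_toFinset,
          Finset.toList_toFinset]
        exact efrc_congr h0 hgeo hS hT hcard hDS hDT
      · rw [efrcl_eq_of_nodup ((efr_nodup_triple (Finset.nodup_toList S)).mpr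
            ⟨hww, (efr_disjoint_iff w w' S).mp hDS⟩),
          efr_toFinset_triple, Finset.toList_toFinset]
        rw [efrcl_eq_of_not_nodup (fun hn => hDT ((efr_disjoint_iff w w' T).mpr
            ((efr_nodup_triple (Finset.nodup_toList T)).mp hn).2))]
        exact efrc_mixed_zero h0 hgeo hS hT hrkl hDS hDT
    · by_cases hDT : Disjoint (w ++ w').toFinset T
      · rw [efrcl_eq_of_nodup ((efr_nodup_triple (Finset.nodup_toList T)).mpr
            ⟨hww, (efr_disjoint_iff w w' T).mp hDT⟩),
          efr_toFinset_triple, Finset.toList_toFinset]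
        rw [efrcl_eq_of_not_nodup (fun hn => hDS ((efr_disjoint_iff w w' S).mpr
            ((efr_nodup_triple (Finset.nodup_toList S)).mp hn).2))]
        exact (efrc_mixed_zero h0 hgeo hT hS (hcard ▸ hrkl) hDT hDS).symm
      · rw [efrcl_eq_of_not_nodup (fun hn => hDS ((efr_disjoint_iff w w' S).mpr
            ((efr_nodup_triple (Finset.nodup_toList S)).mp hn).2)),
          efrcl_eq_of_not_nodup (fun hn => hDT ((efr_disjoint_iff w w' T).mpr
            ((efr_nodup_triple (Finset.nodup_toList T)).mp hn).2))]
  · rw [efrcl_eq_of_not_nodup (fun hn => hww ((efr_nodup_triple (Finset.nodup_toList S)).mp hn).1),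
      efrcl_eq_of_not_nodup (fun hn => hww ((efr_nodup_triple (Finset.nodup_toList T)).mp hn).1)]

end CList

section FMap
variable {k : Type*} [Field k] {A : Type*} [Fintype A] [DecidableEq A] {L' : Type*}

open ExteriorAlgebra

open Classical in
noncomputable def efrF (c : Finset A → L' → k) (i : ℕ) :
    MultilinearMap k (fun _ : Fin i => (A → k)) (L' → k) :=
  ∑ a : Fin i → A,
    if Function.Injective a then
      (LinearMap.toSpanSingleton k (L' → k) (c (Finset.image a Finset.univ))).compMultilinearMap
        ((MultilinearMap.mkPiAlgebra k (Fin i) k).compLinearMap fun j => LinearMap.proj (a j))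
    else 0

lemma efrF_apply (c : Finset A → L' → k) (i : ℕ) (v : Fin i → (A → k)) :
    efrF c i v = ∑ a : Fin i → A,
      if Function.Injective a then (∏ j, v j (a j)) • c (Finset.image a Finset.univ) else 0 := by
  classical
  rw [efrF, MultilinearMap.sum_apply]
  refine Finset.sum_congr rfl fun a _ => ?_
  rw [apply_ite (fun F : MultilinearMap k (fun _ : Fin i => (A → k)) (L' → k) => F v)]
  by_cases h : Function.Injective a
  · rw [if_pos h, if_pos h]
    simp [LinearMap.toSpanSingleton_apply]
  · rw [if_neg h, if_neg h]
    rfl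

lemma efrF_alt (h2 : (2:k) = 0) (c : Finset A → L' → k) (i : ℕ) (v : Fin i → (A → k))
    (p q : Fin i) (hv : v p = v q) (hpq : p ≠ q) : efrF c i v = 0 := by
  classical
  rw [efrF_apply]
  have h1 : ∀ j, v ((Equiv.swap p q) j) = v j := by
    intro j
    rcases eq_or_ne j p with rfl | hjp
    · rw [Equiv.swap_apply_left]; exact hv.symm
    rcases eq_or_ne j q with rfl | hjq
    · rw [Equiv.swap_apply_right]; exact hv
    · rw [Equiv.swap_apply_of_ne_of_ne hjp hjq]
  have feq : ∀ a : Fin i → A,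
      (if Function.Injective (a ∘ (Equiv.swap p q))
        then (∏ j, v j ((a ∘ (Equiv.swap p q)) j)) •
          c (Finset.image (a ∘ (Equiv.swap p q)) Finset.univ) else 0)
      = (if Function.Injective a
        then (∏ j, v j (a j)) • c (Finset.image a Finset.univ) else 0) := by
    intro a
    have hinj : Function.Injective (a ∘ (Equiv.swap p q)) ↔ Function.Injective a :=
      Equiv.injective_comp _ _
    by_cases ha : Function.Injective a
    · have himg : Finset.image (a ∘ (Equiv.swap p q)) Finset.univ
          = Finset.image a Finset.univ := by
        ext x
        simp only [Finset.mem_image, Finset.mem_univ, true_and, Function.comp_apply]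
        constructor
        · rintro ⟨j, rfl⟩; exact ⟨_, rfl⟩
        · rintro ⟨j, rfl⟩; exact ⟨Equiv.swap p q j, by rw [Equiv.swap_apply_self]⟩
      have hprod : (∏ j, v j ((a ∘ (Equiv.swap p q)) j)) = ∏ j, v j (a j) := by
        calc (∏ j, v j ((a ∘ (Equiv.swap p q)) j))
            = ∏ j, (fun j' => v ((Equiv.swap p q) j') (a j')) ((Equiv.swap p q) j) := by
              refine Finset.prod_congr rfl fun j _ => ?_
              simp only [Function.comp_apply, Equiv.swap_apply_self]
          _ = ∏ j, v ((Equiv.swap p q) j) (a j) :=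
              Equiv.prod_comp (Equiv.swap p q) (fun j' => v ((Equiv.swap p q) j') (a j'))
          _ = ∏ j, v j (a j) := Finset.prod_congr rfl fun j _ => by rw [h1 j]
      rw [if_pos (hinj.mpr ha), if_pos ha, hprod, himg]
    · rw [if_neg (fun h => ha (hinj.mp h)), if_neg ha]
  refine Finset.sum_involution (fun a _ => a ∘ (Equiv.swap p q)) ?_ ?_ ?_ ?_
  · intro a _
    show _ + (if Function.Injective (a ∘ (Equiv.swap p q))
        then (∏ j, v j ((a ∘ (Equiv.swap p q)) j)) •
          c (Finset.image (a ∘ (Equiv.swap p q)) Finset.univ) else 0) = 0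
    rw [feq a]
    exact efr_addself (k := k) h2 _
  · intro a _ hfa heq
    have ha : Function.Injective a := by
      by_contra hni
      exact hfa (if_neg hni)
    have := congrFun heq p
    simp only [Function.comp_apply, Equiv.swap_apply_left] at this
    exact hpq (ha this).symm
  · intro a _; exact Finset.mem_univ _
  · intro a _
    funext j
    simp [Equiv.swap_apply_self]

noncomputable def efrAlt (h2 : (2:k) = 0) (c : Finset A → L' → k) (i : ℕ) :
    (A → k) [⋀^Fin i]→ₗ[k] (L' → k) :=
  { efrF c i with
    map_eq_zero_of_eq' := fun v p q hv hpq => efrF_alt h2 c i v p q hv hpq }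

noncomputable def efrPhi (h2 : (2:k) = 0) (c : Finset A → L' → k) :
    ExteriorAlgebra k (A → k) →ₗ[k] (L' → k) :=
  liftAlternating (fun i => efrAlt h2 c i)

lemma efrPhi_single (h2 : (2:k) = 0) (c : Finset A → L' → k) {n : ℕ} (β : Fin n → A)
    (hβ : Function.Injective β) :
    efrPhi h2 c (ιMulti k n (fun j => Pi.single (β j) (1:k)))
      = c (Finset.image β Finset.univ) := by
  classical
  rw [efrPhi, liftAlternating_apply_ιMulti]
  show efrF c n (fun j => Pi.single (β j) (1:k)) = _
  rw [efrF_apply]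
  rw [Finset.sum_eq_single β]
  · rw [if_pos hβ]
    have hone : (∏ j : Fin n, (Pi.single (β j) (1:k) : A → k) (β j)) = (1:k) := by
      simp [Pi.single_eq_same]
    rw [hone, one_smul]
  · intro b _ hb
    by_cases hbinj : Function.Injective b
    · rw [if_pos hbinj]
      have hex : ∃ j, b j ≠ β j := by
        by_contra hc
        push_neg at hc
        exact hb (funext hc)
      obtain ⟨j0, hj0⟩ := hex
      have hz : (Pi.single (β j0) (1:k) : A → k) (b j0) = 0 := Pi.single_eq_of_ne hj0 _
      have hp : (∏ j : Fin n, (Pi.single (β j) (1:k) : A → k) (b j)) = 0 :=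
        Finset.prod_eq_zero (Finset.mem_univ j0) hz
      rw [hp, zero_smul]
    · rw [if_neg hbinj]
  · intro h
    exact absurd (Finset.mem_univ β) h

lemma efrPhi_e (h2 : (2:k) = 0) (c : Finset A → L' → k) (S : Finset A) :
    efrPhi h2 c (efre S) = c S := by
  classical
  have h1 : efre (k := k) S = ιMulti k S.toList.length
      (fun j => Pi.single (S.toList.get j) (1:k)) := by
    rw [ιMulti_apply, efre]
    conv_lhs => rw [← List.ofFn_get S.toList]
    rw [List.map_ofFn]
    rfl
  rw [h1, efrPhi_single h2 c _ (List.nodup_iff_injective_get.mp (Finset.nodup_toList S))]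
  have himg : Finset.image (fun j => S.toList.get j) Finset.univ = S := by
    ext x
    simp only [Finset.mem_image, Finset.mem_univ, true_and]
    rw [← Finset.mem_toList (a := x) (s := S), List.mem_iff_get]
  rw [himg]

lemma efrPhi_listprod (h2 : (2:k) = 0) (c : Finset A → L' → k) (ls : List A) :
    efrPhi h2 c ((ls.map (efrg (k:=k))).prod)
      = if ls.Nodup then c ls.toFinset else 0 := by
  rw [efr_prod_list' h2]
  by_cases h : ls.Nodup
  · rw [if_pos h, if_pos h, efrPhi_e]
  · rw [if_neg h, if_neg h, map_zero]

end FMap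


set_option maxHeartbeats 1000000 in
/-- Proposition 3.2 of the paper: if for each `l ∈ L` one chooses a set of atoms
`Sl l` with join `l` and cardinality `rk l`, then the projections of the exterior
monomials `e (Sl l)`, `l ∈ L`, form a `k`-basis of `⋀L = ⋀V / I_L` (char `k` = 2). -/
theorem exterior_face_ring_basis {L : Type*} [SemilatticeInf L] [OrderBot L]
    [Fintype L] [DecidableEq L]
    (rk : L → ℕ) (h0 : rk ⊥ = 0) (hc : CoverRank rk) (hm : RankStrictMono rk)
    (hat : AtomicRk rk)
    (hgeo : ∀ x y j : L, IsLUB ({x, y} : Set L) j →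
      rk (x ⊓ y) + rk j ≤ rk x + rk y)
    (k : Type*) [Field k] (hchar : ringChar k = 2) :
    let A := {a : L // rk a = 1}
    let V := A → k
    let e : Finset A → ExteriorAlgebra k V := fun S =>
      (S.toList.map fun a => ExteriorAlgebra.ι k (Pi.single a (1 : k))).prod
    let jn : Finset A → L → Prop := fun S l =>
      IsLUB (Subtype.val '' (↑S : Set A)) l
    let gens : Set (ExteriorAlgebra k V) :=
      {x | ∃ S : Finset A, (¬ ∃ l : L, jn S l) ∧ x = e S} ∪
      {x | ∃ S : Finset A, (∃ l : L, jn S l ∧ rk l ≠ S.card) ∧ x = e S} ∪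
      {x | ∃ S T : Finset A, S ≠ T ∧
        (∃ l : L, jn S l ∧ jn T l ∧ rk l = S.card ∧ S.card = T.card) ∧
        x = e S - e T}
    let I : Submodule k (ExteriorAlgebra k V) :=
      Submodule.span k
        {x | ∃ g ∈ gens, ∃ w w' : ExteriorAlgebra k V, x = w * g * w'}
    ∀ Sl : L → Finset A,
      (∀ l : L, jn (Sl l) l ∧ (Sl l).card = rk l) →
      LinearIndependent k (fun l : L => I.mkQ (e (Sl l))) ∧
      Submodule.span k (Set.range fun l : L => I.mkQ (e (Sl l))) = ⊤ := by
  intro A V e jn gens I Sl hSl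
  classical
  haveI hCP : CharP k 2 := hchar ▸ ringChar.charP k
  have h2 : (2:k) = 0 := CharTwo.two_eq_zero
  have he : ∀ S : Finset A, e S = efre (k := k) (A := A) S := fun _ => rfl
  set c : Finset A → L → k := efrc (k := k) rk with hcdef
  set Φ : ExteriorAlgebra k V →ₗ[k] (L → k) := efrPhi h2 c with hΦdef
  -- monomials span the exterior algebra
  have hmul : ∀ x y : ExteriorAlgebra k V,
      x ∈ Submodule.span k (Set.range (efre (k := k) (A := A))) →
      y ∈ Submodule.span k (Set.range (efre (k := k) (A := A))) →
      x * y ∈ Submodule.span k (Set.range (efre (k := k) (A := A))) := by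
    intro x y hx hy
    refine Submodule.span_induction
      (p := fun x _ => x * y ∈ Submodule.span k (Set.range (efre (k := k) (A := A))))
      ?_ ?_ ?_ ?_ hx
    · rintro x' ⟨S, rfl⟩
      refine Submodule.span_induction
        (p := fun y _ => efre S * y ∈ Submodule.span k (Set.range (efre (k := k) (A := A))))
        ?_ ?_ ?_ ?_ hy
      · rintro y' ⟨T, rfl⟩
        have hprod : ((S.toList ++ T.toList).map (efrg (k := k))).prod
            = efre S * efre T := by
          rw [List.map_append, List.prod_append]
          rfl
        rw [← hprod, efr_prod_list' h2]
        by_cases h : (S.toList ++ T.toList).Nodup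
        · rw [if_pos h]
          exact Submodule.subset_span ⟨_, rfl⟩
        · rw [if_neg h]
          exact Submodule.zero_mem _
      · simp only [mul_zero]; exact Submodule.zero_mem _
      · intro a b _ _ ha hb; simp only [mul_add]; exact Submodule.add_mem _ ha hb
      · intro t b _ hb; simp only [mul_smul_comm]; exact Submodule.smul_mem _ _ hb
    · simp only [zero_mul]; exact Submodule.zero_mem _
    · intro a b _ _ ha hb; simp only [add_mul]; exact Submodule.add_mem _ ha hb
    · intro t b _ hb; simp only [smul_mul_assoc]; exact Submodule.smul_mem _ _ hb
  have hmono : ∀ x : ExteriorAlgebra k V,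
      x ∈ Submodule.span k (Set.range (efre (k := k) (A := A))) := by
    intro x
    induction x using ExteriorAlgebra.induction with
    | algebraMap r =>
      have h1 : (efre (k := k) (A := A) ∅) = 1 := by
        simp [efre]
      rw [Algebra.algebraMap_eq_smul_one]
      exact Submodule.smul_mem _ _ (h1 ▸ Submodule.subset_span ⟨∅, rfl⟩)
    | ι v =>
      have hsingle : ∀ a : A, efre (k := k) (A := A) {a}
          = ExteriorAlgebra.ι k (Pi.single a (1:k)) := by
        intro a
        simp [efre, efrg, Finset.toList_singleton]
      have hv : v = ∑ a : A, v a • (Pi.single a (1:k) : A → k) := by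
        funext j
        rw [Finset.sum_apply]
        simp [Pi.single_apply]
        rw [Finset.sum_eq_single j (fun b _ hb => if_neg (Ne.symm hb)) (by simp), if_pos rfl]
      have : ExteriorAlgebra.ι k v
          = ∑ a : A, v a • efre (k := k) (A := A) {a} := by
        conv_lhs => rw [hv]
        rw [map_sum]
        refine Finset.sum_congr rfl fun a _ => ?_
        rw [map_smul, hsingle a]
      rw [this]
      exact Submodule.sum_mem _ fun a _ => Submodule.smul_mem _ _ (Submodule.subset_span ⟨_, rfl⟩)
    | mul a b ha hb => exact hmul a b ha hb
    | add a b ha hb => exact Submodule.add_mem _ ha hb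
  -- Φ on triple products
  have hbridge : ∀ ls : List A, Φ ((ls.map (efrg (k := k))).prod) = efrcl (k := k) rk ls := by
    intro ls
    rw [hΦdef, efrPhi_listprod h2]
    by_cases h : ls.Nodup
    · rw [if_pos h, efrcl_eq_of_nodup h, hcdef]
    · rw [if_neg h, efrcl_eq_of_not_nodup h]
  have htriple : ∀ S' S S'' : Finset A,
      efre (k := k) S' * efre S * efre S''
        = ((S'.toList ++ S.toList ++ S''.toList).map (efrg (k := k))).prod := by
    intro S' S S''
    rw [List.map_append, List.map_append, List.prod_append, List.prod_append]
    rfl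
  -- Φ vanishes on the generators of I
  have hcore : ∀ g ∈ gens, ∀ S' S'' : Finset A, Φ (efre S' * g * efre S'') = 0 := by
    rintro g hg S' S''
    rcases hg with (⟨S, hS, rfl⟩ | ⟨S, ⟨l, hl, hrk⟩, rfl⟩) | ⟨S, T, hST, ⟨l, hlS, hlT, hrkl, hcard⟩, rfl⟩
    · rw [he, htriple, hbridge]
      exact efrcl_gen1 S'.toList S''.toList hS
    · rw [he, htriple, hbridge]
      exact efrcl_gen2 h0 hgeo S'.toList S''.toList hl (fun hh => hrk hh)
    · rw [he, he, mul_sub, sub_mul, map_sub, htriple, htriple, hbridge, hbridge]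
      rw [efrcl_gen3 h0 hgeo S'.toList S''.toList hlS hlT hrkl hcard, sub_self]
  have hker : ∀ g ∈ gens, ∀ w w' : ExteriorAlgebra k V, Φ (w * g * w') = 0 := by
    intro g hg w w'
    refine Submodule.span_induction
      (p := fun y _ => ∀ w : ExteriorAlgebra k V, Φ (w * g * y) = 0)
      ?_ ?_ ?_ ?_ (hmono w') w
    · rintro y ⟨S'', rfl⟩ w
      refine Submodule.span_induction
        (p := fun x _ => Φ (x * g * efre S'') = 0) ?_ ?_ ?_ ?_ (hmono w)
      · rintro x ⟨S', rfl⟩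
        exact hcore g hg S' S''
      · simp only [zero_mul, map_zero]
      · intro a b _ _ ha hb
        simp only [add_mul, map_add]
        rw [ha, hb, add_zero]
      · intro t x _ hx
        simp only [smul_mul_assoc, map_smul]
        rw [hx, smul_zero]
    · intro w
      simp only [mul_zero, map_zero]
    · intro a b _ _ ha hb w
      simp only [mul_add, map_add]
      rw [ha w, hb w, add_zero]
    · intro t y _ hy w
      simp only [mul_smul_comm, map_smul]
      rw [hy w, smul_zero]
  have hIker : I ≤ LinearMap.ker Φ := by
    refine Submodule.span_le.mpr ?_
    rintro x ⟨g, hg, w, w', rfl⟩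
    exact LinearMap.mem_ker.mpr (hker g hg w w')
  set Φbar : (ExteriorAlgebra k V ⧸ I) →ₗ[k] (L → k) := I.liftQ Φ hIker with hΦbar
  have hbarval : ∀ x : ExteriorAlgebra k V, Φbar (I.mkQ x) = Φ x := fun x => rfl
  have hval : ∀ l : L, Φ (e (Sl l)) = fun l' => if l' = l then (1:k) else 0 := by
    intro l
    rw [he, hΦdef, efrPhi_e h2]
    funext l'
    by_cases hl' : l' = l
    · subst hl'
      rw [if_pos rfl, hcdef]
      exact efrc_apply_pos (hSl l').1 ((hSl l').2.symm)
    · rw [if_neg hl', hcdef]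
      exact efrc_apply_neg fun ⟨hlub, _⟩ => hl' (hlub.unique (hSl l).1)
  constructor
  · -- linear independence
    refine LinearIndependent.of_comp Φbar ?_
    have heq : (⇑Φbar ∘ fun l : L => I.mkQ (e (Sl l))) = fun l => Pi.single l (1:k) := by
      funext l
      rw [Function.comp_apply, hbarval, hval l]
      funext l'
      rw [Pi.single_apply]
    rw [heq]
    have hli := (Pi.basisFun k L).linearIndependent
    have heq2 : ⇑(Pi.basisFun k L) = fun l : L => Pi.single l (1:k) := by
      funext l
      rw [Pi.basisFun_apply]
    rwa [heq2] at hli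
  · -- spanning
    rw [eq_top_iff]
    rintro x -
    obtain ⟨y, rfl⟩ := Submodule.mkQ_surjective I x
    refine Submodule.span_induction
      (p := fun y _ => I.mkQ y ∈ Submodule.span k (Set.range fun l : L => I.mkQ (e (Sl l))))
      ?_ ?_ ?_ ?_ (hmono y)
    · rintro z ⟨S, rfl⟩
      by_cases hjoin : ∃ l : L, jn S l
      · obtain ⟨l, hl⟩ := hjoin
        by_cases hr : rk l = S.card
        · by_cases hSe : S = Sl l
          · subst hSe
            exact Submodule.subset_span ⟨l, (congrArg I.mkQ (he _)).symm⟩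
          · have hgen : (e S - e (Sl l)) ∈ gens := Or.inr
              ⟨S, Sl l, hSe, ⟨l, hl, (hSl l).1, hr, by rw [(hSl l).2]; exact hr.symm⟩, rfl⟩
            have hmem : e S - e (Sl l) ∈ I :=
              Submodule.subset_span ⟨_, hgen, 1, 1, by rw [one_mul, mul_one]⟩
            have hq : I.mkQ (e S) = I.mkQ (e (Sl l)) := (Submodule.Quotient.eq I).mpr hmem
            rw [← he, hq]
            exact Submodule.subset_span ⟨l, rfl⟩
        · have hgen : e S ∈ gens := Or.inl (Or.inr ⟨S, ⟨l, hl, fun hh => hr hh⟩, rfl⟩)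
          have hmem : e S ∈ I :=
            Submodule.subset_span ⟨_, hgen, 1, 1, by rw [one_mul, mul_one]⟩
          have hq : I.mkQ (e S) = 0 := (Submodule.Quotient.mk_eq_zero I).mpr hmem
          rw [← he, hq]
          exact Submodule.zero_mem _
      · have hgen : e S ∈ gens := Or.inl (Or.inl ⟨S, hjoin, rfl⟩)
        have hmem : e S ∈ I :=
          Submodule.subset_span ⟨_, hgen, 1, 1, by rw [one_mul, mul_one]⟩
        have hq : I.mkQ (e S) = 0 := (Submodule.Quotient.mk_eq_zero I).mpr hmem
        rw [← he, hq]
        exact Submodule.zero_mem _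
    · simp only [map_zero]; exact Submodule.zero_mem _
    · intro a b _ _ ha hb; simp only [map_add]; exact Submodule.add_mem _ ha hb
    · intro t a _ ha; simp only [map_smul]; exact Submodule.smul_mem _ _ ha
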